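/- Let M ∈ SL(2,ℝ), let r = (r₁,r₂) and s = (s₁,s₂) be as in the proof of the three gap theorem: r ∈ A ∩ ℤ²M with minimal second coordinate, s ∈ (A ∩ ℤ²M) \ ℤr with minimal second coordinate, s₂ > r₂, and r₁s₁ < 0, where A = (-1,1) × (0,∞). Set J_r = (0,1] ∩ (-r₁, 1-r₁] and J_s = (0,1] ∩ (-s₁, 1-s₁]. Then for all t ∈ (0,1]: F(M,t) = r₂ if t ∈ J_r; F(M,t) = s₂ if t ∈ J_s \ J_r; and F(M,t) = r₂ + s₂ if t ∈ (0,1] \ (J_r ∪ J_s). -/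

import Mathlib

open Matrix Set

noncomputable section

/-- The lattice ℤ²M (row-vector convention). -/
def lat (M : Matrix.SpecialLinearGroup (Fin 2) ℝ) : Set (ℝ × ℝ) :=
  { p | ∃ m n : ℤ, p = ((m : ℝ) * M.1 0 0 + (n : ℝ) * M.1 1 0,
                        (m : ℝ) * M.1 0 1 + (n : ℝ) * M.1 1 1) }

/-- The set { y > 0 : (x,y) ∈ ℤ²M, -t < x ≤ 1-t }. -/
def Fset (M : Matrix.SpecialLinearGroup (Fin 2) ℝ) (t : ℝ) : Set ℝ :=
  { y | 0 < y ∧ ∃ x : ℝ, (x, y) ∈ lat M ∧ -t < x ∧ x ≤ 1 - t }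

/-- F(M,t) = min{ y > 0 : (x,y) ∈ ℤ²M, -t < x ≤ 1-t }. -/
noncomputable def F (M : Matrix.SpecialLinearGroup (Fin 2) ℝ) (t : ℝ) : ℝ :=
  sInf (Fset M t)

/-- The set of positive values (ℓ-k)α + n with 0 < ℓ ≤ N. -/
def gapSet (α : ℝ) (N k : ℤ) : Set ℝ :=
  { v | 0 < v ∧ ∃ l n : ℤ, 0 < l ∧ l ≤ N ∧ v = ((l : ℝ) - (k : ℝ)) * α + (n : ℝ) }

/-- s_{k,N}: the gap from {kα} to its next neighbor among {α},...,{Nα}. -/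
noncomputable def gap (α : ℝ) (N k : ℤ) : ℝ := sInf (gapSet α N k)

/-- The region A = (-1,1) × (0,∞). -/
def regA : Set (ℝ × ℝ) := Set.Ioo (-1 : ℝ) 1 ×ˢ Set.Ioi (0 : ℝ)

lemma lat_add {M} {p q : ℝ × ℝ} (hp : p ∈ lat M) (hq : q ∈ lat M) : p + q ∈ lat M := by
  obtain ⟨m, n, hp⟩ := hp
  obtain ⟨m', n', hq⟩ := hq
  refine ⟨m + m', n + n', ?_⟩
  rw [hp, hq, Prod.ext_iff]
  constructor <;> · simp; ring

lemma lat_sub {M} {p q : ℝ × ℝ} (hp : p ∈ lat M) (hq : q ∈ lat M) : p - q ∈ lat M := by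
  obtain ⟨m, n, hp⟩ := hp
  obtain ⟨m', n', hq⟩ := hq
  refine ⟨m - m', n - n', ?_⟩
  rw [hp, hq, Prod.ext_iff]
  constructor <;> · simp; ring

lemma lat_zsmul {M} (k : ℤ) {p : ℝ × ℝ} (hp : p ∈ lat M) : k • p ∈ lat M := by
  obtain ⟨m, n, hp⟩ := hp
  refine ⟨k * m, k * n, ?_⟩
  rw [hp, Prod.ext_iff]
  constructor <;> · simp [zsmul_eq_mul]; ring

lemma F_eq {M : Matrix.SpecialLinearGroup (Fin 2) ℝ} {t c : ℝ}
    (hc : c ∈ Fset M t) (hlb : ∀ y ∈ Fset M t, c ≤ y) : F M t = c :=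
  le_antisymm (csInf_le ⟨c, hlb⟩ hc) (le_csInf ⟨c, hc⟩ hlb)

/-- If t ∉ J_r, no positive multiple of r fits in the window. -/
lemma mult_out {r1 t : ℝ} (ht0 : 0 < t) (ht1 : t ≤ 1)
    (hra : -1 < r1) (hrb : r1 < 1) (hne : r1 ≠ 0)
    (h : ¬(-r1 < t ∧ t ≤ 1 - r1)) :
    ∀ k : ℤ, 1 ≤ k → ¬(-t < (k : ℝ) * r1 ∧ (k : ℝ) * r1 ≤ 1 - t) := by
  intro k hk hcon
  have hk' : (1 : ℝ) ≤ (k : ℝ) := by exact_mod_cast hk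
  rcases lt_or_gt_of_ne hne with hneg | hpos
  · -- r1 < 0 : then t ≤ -r1, so k*r1 ≤ r1 ≤ -t
    have h1 : ¬(-r1 < t) := by
      intro ha
      exact h ⟨ha, by linarith⟩
    push_neg at h1
    have : (k : ℝ) * r1 ≤ r1 := by nlinarith
    exact absurd hcon.1 (by linarith)
  · -- r1 > 0 : then 1 - r1 < t, so k*r1 ≥ r1 > 1 - t
    have h2 : ¬(t ≤ 1 - r1) := by
      intro hb
      exact h ⟨by linarith, hb⟩
    push_neg at h2
    have : r1 ≤ (k : ℝ) * r1 := by nlinarith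
    exact absurd hcon.2 (by linarith)

/-- The explicit formula for F(M,t) in terms of the intervals J_r and J_s. -/
theorem F_formula (M : Matrix.SpecialLinearGroup (Fin 2) ℝ)
    (r s : ℝ × ℝ)
    (hr : r ∈ regA ∩ lat M)
    (hrmin : ∀ p ∈ regA ∩ lat M, r.2 ≤ p.2)
    (hs : s ∈ regA ∩ lat M)
    (hsr : ∀ k : ℤ, s ≠ k • r)
    (hsmin : ∀ p ∈ regA ∩ lat M, (∀ k : ℤ, p ≠ k • r) → s.2 ≤ p.2)
    (hlt : r.2 < s.2)
    (hsign : r.1 * s.1 < 0) :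
    ∀ t : ℝ, t ∈ Set.Ioc (0 : ℝ) 1 →
      (t ∈ Set.Ioc (0 : ℝ) 1 ∩ Set.Ioc (-r.1) (1 - r.1) → F M t = r.2) ∧
      (t ∈ (Set.Ioc (0 : ℝ) 1 ∩ Set.Ioc (-s.1) (1 - s.1)) \
            (Set.Ioc (0 : ℝ) 1 ∩ Set.Ioc (-r.1) (1 - r.1)) → F M t = s.2) ∧
      (t ∉ (Set.Ioc (0 : ℝ) 1 ∩ Set.Ioc (-r.1) (1 - r.1)) ∪
            (Set.Ioc (0 : ℝ) 1 ∩ Set.Ioc (-s.1) (1 - s.1)) →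
        F M t = r.2 + s.2) := by
  obtain ⟨hrA, hrL⟩ := hr
  obtain ⟨hsA, hsL⟩ := hs
  have hr1a : -1 < r.1 := hrA.1.1
  have hr1b : r.1 < 1 := hrA.1.2
  have hr2pos : (0 : ℝ) < r.2 := hrA.2
  have hs1a : -1 < s.1 := hsA.1.1
  have hs1b : s.1 < 1 := hsA.1.2
  have hs2pos : (0 : ℝ) < s.2 := hsA.2
  have hr1ne : r.1 ≠ 0 := fun h => by rw [h] at hsign; simp at hsign
  have hs1ne : s.1 ≠ 0 := fun h => by rw [h] at hsign; simp at hsign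
  intro t ht
  obtain ⟨ht0, ht1⟩ := ht
  have hrL' : (r.1, r.2) ∈ lat M := by simpa using hrL
  have hsL' : (s.1, s.2) ∈ lat M := by simpa using hsL
  -- global lower bound r.2
  have hlbr : ∀ y ∈ Fset M t, r.2 ≤ y := by
    rintro y ⟨hy, x, hxL, hx1, hx2⟩
    exact hrmin (x, y) ⟨⟨⟨by linarith, by linarith⟩, hy⟩, hxL⟩
  -- if t ∉ J_r, nothing in the window is a multiple of r
  have hnotmul : ¬(-r.1 < t ∧ t ≤ 1 - r.1) →
      ∀ x y : ℝ, 0 < y → -t < x → x ≤ 1 - t → ∀ k : ℤ, (x, y) ≠ k • r := by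
    intro hnJ x y hy h1 h2 k hk
    have e1 : x = (k : ℝ) * r.1 := by
      have := congrArg Prod.fst hk
      simpa [zsmul_eq_mul] using this
    have e2 : y = (k : ℝ) * r.2 := by
      have := congrArg Prod.snd hk
      simpa [zsmul_eq_mul] using this
    have hkpos : (0 : ℝ) < (k : ℝ) := by nlinarith
    have hk1 : (1 : ℤ) ≤ k := by exact_mod_cast Int.cast_pos.mp hkpos
    exact mult_out ht0 ht1 hr1a hr1b hr1ne hnJ k hk1 ⟨by rw [← e1]; exact h1, by rw [← e1]; exact h2⟩
  -- if t ∉ J_r, s.2 is a lower bound for Fset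
  have hlbs : ¬(-r.1 < t ∧ t ≤ 1 - r.1) → ∀ y ∈ Fset M t, s.2 ≤ y := by
    rintro hnJ y ⟨hy, x, hxL, hx1, hx2⟩
    exact hsmin (x, y) ⟨⟨⟨by linarith, by linarith⟩, hy⟩, hxL⟩ (hnotmul hnJ x y hy hx1 hx2)
  refine ⟨?_, ?_, ?_⟩
  · -- t ∈ J_r
    rintro ⟨-, htr1, htr2⟩
    exact F_eq ⟨hr2pos, r.1, hrL', by linarith, by linarith⟩ hlbr
  · -- t ∈ J_s \ J_r
    rintro ⟨⟨-, hts1, hts2⟩, htr⟩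
    have hnJ : ¬(-r.1 < t ∧ t ≤ 1 - r.1) := fun h => htr ⟨⟨ht0, ht1⟩, h⟩
    exact F_eq ⟨hs2pos, s.1, hsL', by linarith, by linarith⟩ (hlbs hnJ)
  · -- t outside both
    intro hto
    have hnJr : ¬(-r.1 < t ∧ t ≤ 1 - r.1) := fun h => hto (Or.inl ⟨⟨ht0, ht1⟩, h⟩)
    have hnJs : ¬(-s.1 < t ∧ t ≤ 1 - s.1) := fun h => hto (Or.inr ⟨⟨ht0, ht1⟩, h⟩)
    -- sign facts
    have hsgn : (0 < r.1 ∧ s.1 < 0 ∧ 1 - t < r.1 ∧ s.1 ≤ -t) ∨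
                (r.1 < 0 ∧ 0 < s.1 ∧ r.1 ≤ -t ∧ 1 - t < s.1) := by
      rcases mul_neg_iff.mp hsign with ⟨hrp, hsn⟩ | ⟨hrn, hsp⟩
      · left
        refine ⟨hrp, hsn, ?_, ?_⟩
        · by_contra hx
          exact hnJr ⟨by linarith, by linarith⟩
        · by_contra hx
          exact hnJs ⟨by linarith, by linarith⟩
      · right
        refine ⟨hrn, hsp, ?_, ?_⟩
        · by_contra hx
          exact hnJr ⟨by linarith, by linarith⟩
        · by_contra hx
          exact hnJs ⟨by linarith, by linarith⟩
    -- membership of r.2 + s.2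
    have hmem : r.2 + s.2 ∈ Fset M t := by
      refine ⟨by linarith, r.1 + s.1, ?_, ?_, ?_⟩
      · have := lat_add hrL' hsL'
        exact this
      · rcases hsgn with ⟨_, _, h3, h4⟩ | ⟨_, _, h3, h4⟩ <;> linarith
      · rcases hsgn with ⟨_, _, h3, h4⟩ | ⟨_, _, h3, h4⟩ <;> linarith
    refine F_eq hmem ?_
    rintro y ⟨hy, x, hxL, hx1, hx2⟩
    have hys : s.2 ≤ y := hlbs hnJr y ⟨hy, x, hxL, hx1, hx2⟩
    by_contra hcon
    push_neg at hcon
    have hpnm : ∀ k : ℤ, (x, y) ≠ k • r := hnotmul hnJr x y hy hx1 hx2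
    by_cases hq : -1 < x - r.1 ∧ x - r.1 < 1
    · -- subtract r
      have hqL : (x - r.1, y - r.2) ∈ lat M := by
        have := lat_sub hxL hrL'
        exact this
      by_cases hqm : ∃ k : ℤ, (x - r.1, y - r.2) = k • r
      · obtain ⟨k, hk⟩ := hqm
        have e1 : x - r.1 = (k : ℝ) * r.1 := by
          have := congrArg Prod.fst hk
          simpa [zsmul_eq_mul] using this
        have e2 : y - r.2 = (k : ℝ) * r.2 := by
          have := congrArg Prod.snd hk
          simpa [zsmul_eq_mul] using this
        apply hpnm (k + 1)
        rw [Prod.ext_iff]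
        constructor <;> · simp [zsmul_eq_mul]; push_cast; linarith
      · push_neg at hqm
        have := hsmin (x - r.1, y - r.2)
          ⟨⟨⟨hq.1, hq.2⟩, show (0:ℝ) < y - r.2 by linarith⟩, hqL⟩ hqm
        simp only at this
        linarith
    · -- subtract s
      have hq' : -1 < x - s.1 ∧ x - s.1 < 1 := by
        push_neg at hq
        rcases hsgn with ⟨h1, h2, h3, h4⟩ | ⟨h1, h2, h3, h4⟩
        · have hfail : x - r.1 ≤ -1 := by
            by_contra hc
            push_neg at hc
            have := hq hc
            linarith
          constructor <;> linarith
        · have hfail : 1 ≤ x - r.1 := hq (by linarith)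
          constructor <;> linarith
      have hqL : (x - s.1, y - s.2) ∈ lat M := by
        have := lat_sub hxL hsL'
        exact this
      rcases eq_or_lt_of_le hys with he | hlt2
      · -- y = s.2 : the vector (a,0)
        have hane : x - s.1 ≠ 0 := by
          intro h
          have hx : x = s.1 := by linarith
          exact hnJs ⟨by rw [← hx]; linarith, by rw [← hx]; linarith⟩
        have haL : (x - s.1, (0:ℝ)) ∈ lat M := by
          have h0 : y - s.2 = 0 := by linarith
          rw [← h0]; exact hqL
        set a : ℝ := |x - s.1| with ha_def
        have hapos : 0 < a := abs_pos.mpr hane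
        have ha1 : a < 1 := abs_lt.mpr ⟨hq'.1, hq'.2⟩ |> fun h => h
        have haL' : (a, (0:ℝ)) ∈ lat M := by
          rcases abs_choice (x - s.1) with h | h
          · rw [ha_def, h]; exact haL
          · rw [ha_def, h]
            have := lat_zsmul (-1 : ℤ) haL
            simpa using this
        set k : ℤ := ⌊(-t - r.1) / a⌋ + 1 with hk_def
        have hfl : ((⌊(-t - r.1) / a⌋ : ℤ) : ℝ) ≤ (-t - r.1) / a := Int.floor_le _
        have hfu : (-t - r.1) / a < ((⌊(-t - r.1) / a⌋ : ℤ) : ℝ) + 1 := Int.lt_floor_add_one _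
        have hb1 : -t < r.1 + (k : ℝ) * a := by
          have : -t - r.1 < (k : ℝ) * a := by
            rw [hk_def]
            push_cast
            calc -t - r.1 = ((-t - r.1) / a) * a := by field_simp
            _ < ((⌊(-t - r.1) / a⌋ : ℝ) + 1) * a := by
                apply mul_lt_mul_of_pos_right _ hapos
                exact hfu
          linarith
        have hb2 : r.1 + (k : ℝ) * a ≤ 1 - t := by
          have : (k : ℝ) * a ≤ -t - r.1 + a := by
            rw [hk_def]
            push_cast
            have : ((⌊(-t - r.1) / a⌋ : ℝ) + 1) * a ≤ ((-t - r.1) / a + 1) * a := by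
              apply mul_le_mul_of_nonneg_right _ (le_of_lt hapos)
              linarith
            calc ((⌊(-t - r.1) / a⌋ : ℝ) + 1) * a ≤ ((-t - r.1) / a + 1) * a := this
            _ = -t - r.1 + a := by field_simp
          linarith
        have hvL : (r.1 + (k : ℝ) * a, r.2) ∈ lat M := by
          have h1 := lat_add hrL' (lat_zsmul k haL')
          have h2 : ((r.1, r.2) : ℝ × ℝ) + k • ((a, (0:ℝ)) : ℝ × ℝ)
              = (r.1 + (k : ℝ) * a, r.2) := by
            simp [Prod.ext_iff, zsmul_eq_mul]
          rw [h2] at h1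
          exact h1
        have hvnm : ∀ k' : ℤ, (r.1 + (k : ℝ) * a, r.2) ≠ k' • r := by
          intro k' hk'
          have e2 : r.2 = (k' : ℝ) * r.2 := by
            have := congrArg Prod.snd hk'
            simpa [zsmul_eq_mul] using this
          have hk'1 : (k' : ℝ) = 1 := by
            have h5 : ((k' : ℝ) - 1) * r.2 = 0 := by
              rw [sub_mul, one_mul, ← e2]; ring
            rcases mul_eq_zero.mp h5 with h | h
            · linarith
            · exact absurd h (ne_of_gt hr2pos)
          have e1 : r.1 + (k : ℝ) * a = (k' : ℝ) * r.1 := by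
            have := congrArg Prod.fst hk'
            simpa [zsmul_eq_mul] using this
          rw [hk'1, one_mul] at e1
          have hr1win : ¬(-t < r.1 ∧ r.1 ≤ 1 - t) := by
            have h3 := mult_out ht0 ht1 hr1a hr1b hr1ne hnJr 1 le_rfl
            push_cast at h3
            simpa using h3
          exact hr1win ⟨e1 ▸ hb1, e1 ▸ hb2⟩
        have := hsmin (r.1 + (k : ℝ) * a, r.2)
          ⟨⟨⟨show (-1:ℝ) < r.1 + (k : ℝ) * a by linarith,
             show r.1 + (k : ℝ) * a < 1 by linarith⟩, hr2pos⟩, hvL⟩ hvnm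
        simp only at this
        linarith
      · -- y > s.2 : contradicts minimality of r
        have := hrmin (x - s.1, y - s.2)
          ⟨⟨⟨hq'.1, hq'.2⟩, show (0:ℝ) < y - s.2 by linarith⟩, hqL⟩
        simp only at this
        linarith
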